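/- For n ≥ 2 with n ≡ 0 or 3 (mod 4), the Cayley graph Q₊ⁿ of (Z/2Z)^n with generating set {e₁, …, eₙ, e₁+⋯+eₙ} admits an orthogonal signing. -/

import Mathlib

open scoped Classical

def cayley (n : ℕ) (S : Set (Fin n → ZMod 2)) : SimpleGraph (Fin n → ZMod 2) where
  Adj x y := x ≠ y ∧ x + y ∈ S
  symm := by
    constructor
    intro x y h
    exact ⟨h.1.symm, by rw [add_comm]; exact h.2⟩
  loopless := by
    constructor
    intro x h
    exact h.1 rfl

/-- The generating set `{e₁, …, eₙ, e₁ + ⋯ + eₙ}` of `Q₊ⁿ`. -/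
def QPlusGens (n : ℕ) : Set (Fin n → ZMod 2) :=
  Set.range (fun i : Fin n => Pi.single i 1) ∪ {∑ i : Fin n, Pi.single i 1}

/-- The graph `Q₊ⁿ`. -/
def QPlus (n : ℕ) : SimpleGraph (Fin n → ZMod 2) := cayley n (QPlusGens n)

/-- An orthogonal signing of a graph `G` on a finite vertex set: a symmetric matrix with
entries `±1` on edges and `0` elsewhere, whose distinct rows are orthogonal. -/
def IsOrthSigning {V : Type*} [Fintype V] (G : SimpleGraph V) (M : Matrix V V ℝ) : Prop :=
  M.IsSymm ∧ (∀ u v, G.Adj u v → M u v = 1 ∨ M u v = -1) ∧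
    (∀ u v, ¬ G.Adj u v → M u v = 0) ∧
    (∀ u v, u ≠ v → ∑ w, M u w * M v w = 0)

/-! ### Auxiliary definitions for the orthogonal signing -/

noncomputable def sgn (a : ZMod 2) : ℝ := if a = 0 then 1 else -1

lemma sgn_zero : sgn 0 = 1 := if_pos rfl
lemma sgn_one : sgn 1 = -1 := if_neg (by decide)

lemma sgn_add (a b : ZMod 2) : sgn (a + b) = sgn a * sgn b := by
  have h : ∀ c : ZMod 2, c = 0 ∨ c = 1 := by decide
  rcases h a with rfl | rfl <;> rcases h b with rfl | rfl <;>
    simp [sgn, show (1 + 1 : ZMod 2) = 0 by decide]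

lemma sgn_cases (a : ZMod 2) : sgn a = 1 ∨ sgn a = -1 := by
  unfold sgn; split_ifs <;> simp

noncomputable def epsA (n : ℕ) (i : Fin n) (u : Fin n → ZMod 2) : ℝ :=
  ∏ j, if i < j then sgn (u j) else 1

noncomputable def epsB (n : ℕ) (u : Fin n → ZMod 2) : ℝ :=
  ∏ j : Fin n, if (j : ℕ) % 2 ≠ n % 2 then sgn (u j) else 1

noncomputable def eps (n : ℕ) (k : Option (Fin n)) (u : Fin n → ZMod 2) : ℝ :=
  k.elim (epsB n u) (fun i => epsA n i u)

@[simp] lemma eps_some (n : ℕ) (i : Fin n) (u : Fin n → ZMod 2) :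
    eps n (some i) u = epsA n i u := rfl
@[simp] lemma eps_none (n : ℕ) (u : Fin n → ZMod 2) : eps n none u = epsB n u := rfl

noncomputable def gen (n : ℕ) (k : Option (Fin n)) : Fin n → ZMod 2 :=
  k.elim 1 (fun i => Pi.single i 1)

@[simp] lemma gen_some (n : ℕ) (i : Fin n) : gen n (some i) = Pi.single i 1 := rfl
@[simp] lemma gen_none (n : ℕ) : gen n none = 1 := rfl

lemma addself {n : ℕ} (x : Fin n → ZMod 2) : x + x = 0 := by
  funext j
  show x j + x j = 0
  have : ∀ a : ZMod 2, a + a = 0 := by decide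
  exact this _

lemma shuffle {n : ℕ} {a b x y : Fin n → ZMod 2} (h : a + x = b + y) : a + y = b + x := by
  linear_combination h + addself y - addself x

lemma eps_pm (n : ℕ) (k : Option (Fin n)) (u : Fin n → ZMod 2) :
    eps n k u = 1 ∨ eps n k u = -1 := by
  have hmul : ∀ a b : ℝ, (a = 1 ∨ a = -1) → (b = 1 ∨ b = -1) → (a * b = 1 ∨ a * b = -1) := by
    rintro a b (rfl | rfl) (rfl | rfl) <;> norm_num
  cases k <;> simp only [eps_some, eps_none, epsA, epsB] <;>
  · refine Finset.prod_induction _ (fun r => r = 1 ∨ r = -1) hmul (Or.inl rfl) ?_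
    intro j _
    split_ifs
    · exact sgn_cases _
    · exact Or.inl rfl

lemma eps_mul (n : ℕ) (k : Option (Fin n)) (u w : Fin n → ZMod 2) :
    eps n k (u + w) = eps n k u * eps n k w := by
  cases k <;> simp only [eps_some, eps_none, epsA, epsB] <;>
  · rw [← Finset.prod_mul_distrib]
    refine Finset.prod_congr rfl fun j _ => ?_
    split_ifs
    · exact sgn_add _ _
    · norm_num

lemma eps_some_single (n : ℕ) (i j : Fin n) :
    epsA n i (Pi.single j 1) = if i < j then -1 else 1 := by
  have h : epsA n i (Pi.single j 1)
      = ∏ m, if m = j then (if i < j then (-1 : ℝ) else 1) else 1 := by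
    rw [epsA]
    refine Finset.prod_congr rfl fun m _ => ?_
    by_cases hm : m = j
    · subst hm; simp [sgn_one]
    · simp [hm, Pi.single_apply, sgn_zero]
  rw [h, Finset.prod_ite_eq']; simp

lemma eps_none_single (n : ℕ) (j : Fin n) :
    epsB n (Pi.single j 1) = if (j : ℕ) % 2 ≠ n % 2 then -1 else 1 := by
  have h : epsB n (Pi.single j 1)
      = ∏ m, if m = j then (if (j : ℕ) % 2 ≠ n % 2 then (-1 : ℝ) else 1) else 1 := by
    rw [epsB]
    refine Finset.prod_congr rfl fun m _ => ?_
    by_cases hm : m = j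
    · subst hm; simp [sgn_one]
    · simp [hm, Pi.single_apply, sgn_zero]
  rw [h, Finset.prod_ite_eq']; simp

lemma eps_some_one (n : ℕ) (i : Fin n) :
    epsA n i 1 = (-1) ^ (n - ((i : ℕ) + 1)) := by
  have h1 : epsA n i 1
      = ∏ m ∈ Finset.range n, (if (i : ℕ) < m then (-1 : ℝ) else 1) := by
    rw [← Fin.prod_univ_eq_prod_range (fun m => if (i : ℕ) < m then (-1 : ℝ) else 1) n, epsA]
    refine Finset.prod_congr rfl fun m _ => ?_
    simp only [Pi.one_apply, sgn_one, Fin.lt_def]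
  rw [h1, ← Finset.prod_range_mul_prod_Ico _ (show (i : ℕ) + 1 ≤ n from i.isLt)]
  rw [Finset.prod_eq_one (fun m hm => by
    rw [Finset.mem_range] at hm; rw [if_neg (by omega)])]
  rw [show (∏ m ∈ Finset.Ico ((i : ℕ) + 1) n, if (i : ℕ) < m then (-1 : ℝ) else 1)
      = ∏ _m ∈ Finset.Ico ((i : ℕ) + 1) n, (-1 : ℝ) from
    Finset.prod_congr rfl fun m hm => by
      rw [Finset.mem_Ico] at hm; rw [if_pos (by omega)]]
  rw [Finset.prod_const, Nat.card_Ico, one_mul]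

lemma prod_parity (n m : ℕ) :
    ∏ j ∈ Finset.range (2 * m), (if j % 2 ≠ n % 2 then (-1 : ℝ) else 1) = (-1) ^ m := by
  induction m with
  | zero => simp
  | succ m ih =>
      have h2 : 2 * (m + 1) = (2 * m + 1) + 1 := by omega
      rw [h2, Finset.prod_range_succ, Finset.prod_range_succ, ih]
      have e1 : (2 * m) % 2 = 0 := by omega
      have e2 : (2 * m + 1) % 2 = 1 := by omega
      rcases Nat.mod_two_eq_zero_or_one n with h | h
      · simp only [e1, e2, h]
        norm_num
        rw [pow_succ]; ring
      · simp only [e1, e2, h]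
        norm_num
        rw [pow_succ]; ring
  
lemma eps_none_one (n : ℕ) (hmod : n % 4 = 0 ∨ n % 4 = 3) :
    epsB n 1 = 1 := by
  have h1 : epsB n 1
      = ∏ m ∈ Finset.range n, (if m % 2 ≠ n % 2 then (-1 : ℝ) else 1) := by
    rw [← Fin.prod_univ_eq_prod_range (fun m => if m % 2 ≠ n % 2 then (-1 : ℝ) else 1) n, epsB]
    refine Finset.prod_congr rfl fun m _ => ?_
    simp only [Pi.one_apply, sgn_one]
  rw [h1]
  rcases hmod with h | h
  · rw [show n = 2 * (n / 2) by omega, prod_parity]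
    exact Even.neg_one_pow ⟨n / 4, by omega⟩
  · rw [show n = (2 * (n / 2)) + 1 from by omega, Finset.prod_range_succ, prod_parity]
    rw [if_pos (by omega), Odd.neg_one_pow ⟨n / 4, by omega⟩]
    norm_num

lemma eps_self (n : ℕ) (hmod : n % 4 = 0 ∨ n % 4 = 3) (k : Option (Fin n)) :
    eps n k (gen n k) = 1 := by
  cases k with
  | some i => rw [gen_some, eps_some, eps_some_single, if_neg (lt_irrefl i)]
  | none => rw [gen_none, eps_none]; exact eps_none_one n hmod

lemma eps_anti (n : ℕ) {k l : Option (Fin n)} (hkl : k ≠ l) :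
    eps n l (gen n k) + eps n k (gen n l) = 0 := by
  have key : ∀ i : Fin n, eps n none (gen n (some i)) + eps n (some i) (gen n none) = 0 := by
    intro i
    rw [gen_some, gen_none, eps_none, eps_some, eps_none_single, eps_some_one]
    have hi := i.isLt
    rcases Nat.even_or_odd (n - ((i : ℕ) + 1)) with ⟨c, hc⟩ | ⟨c, hc⟩
    · rw [if_pos (by omega), hc, Even.neg_one_pow ⟨c, rfl⟩]
      norm_num
    · rw [if_neg (by omega), hc, Odd.neg_one_pow ⟨c, rfl⟩]
      norm_num
  match k, l with
  | some i, some j =>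
      have hij : i ≠ j := fun h => hkl (by rw [h])
      rw [gen_some, gen_some, eps_some, eps_some, eps_some_single, eps_some_single]
      rcases lt_trichotomy i j with h | h | h
      · rw [if_neg (asymm h), if_pos h]; norm_num
      · exact absurd h hij
      · rw [if_pos h, if_neg (asymm h)]; norm_num
  | some i, none => have := key i; linarith
  | none, some i => have := key i; linarith
  | none, none => exact absurd rfl hkl

lemma single_ne_one {n : ℕ} (hn : 2 ≤ n) (i : Fin n) :
    (Pi.single i 1 : Fin n → ZMod 2) ≠ 1 := by
  intro h
  haveI : Nontrivial (Fin n) := Fin.nontrivial_iff_two_le.mpr hn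
  obtain ⟨j, hj⟩ := exists_ne i
  have h2 := congrFun h j
  rw [Pi.single_apply, if_neg hj, Pi.one_apply] at h2
  exact absurd h2.symm (by decide)

lemma gen_inj (n : ℕ) (hn : 2 ≤ n) : Function.Injective (gen n) := by
  intro k l h
  match k, l with
  | some i, some j =>
      by_cases hij : i = j
      · rw [hij]
      · exfalso
        have h2 : (1 : ZMod 2) = if i = j then 1 else 0 := by
          simpa [Pi.single_apply] using congrFun h i
        rw [if_neg hij] at h2
        exact absurd h2 (by decide)
  | some i, none => exact absurd h (single_ne_one hn i)
  | none, some i => exact absurd h.symm (single_ne_one hn i)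
  | none, none => rfl

lemma gen_ne_zero (n : ℕ) (hn : 2 ≤ n) (k : Option (Fin n)) : gen n k ≠ 0 := by
  intro h
  match k with
  | some i =>
      have h2 := congrFun h i
      simp only [gen_some, Pi.single_apply, if_pos rfl, Pi.zero_apply] at h2
      exact absurd h2 (by decide)
  | none =>
      have h2 := congrFun h ⟨0, by omega⟩
      rw [gen_none, Pi.one_apply, Pi.zero_apply] at h2
      exact absurd h2 (by decide)

lemma gen_mem (n : ℕ) (k : Option (Fin n)) : gen n k ∈ QPlusGens n := by
  match k with
  | some i => exact Or.inl ⟨i, rfl⟩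
  | none =>
      right
      rw [gen_none]
      show (1 : Fin n → ZMod 2) ∈ {∑ i : Fin n, Pi.single i 1}
      rw [Set.mem_singleton_iff, Finset.univ_sum_single (fun _ : Fin n => (1 : ZMod 2))]
      rfl

noncomputable def Msign (n : ℕ) : Matrix (Fin n → ZMod 2) (Fin n → ZMod 2) ℝ :=
  fun u v => ∑ k : Option (Fin n), if v = u + gen n k then eps n k u else 0

theorem stmt14 (n : ℕ) (hn : 2 ≤ n) (hmod : n % 4 = 0 ∨ n % 4 = 3) :
    ∃ M : Matrix (Fin n → ZMod 2) (Fin n → ZMod 2) ℝ, IsOrthSigning (QPlus n) M := by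
  refine ⟨Msign n, ?_, ?_, ?_, ?_⟩
  · -- symmetry
    rw [Matrix.IsSymm]
    ext u v
    rw [Matrix.transpose_apply]
    unfold Msign
    refine Finset.sum_congr rfl fun k _ => ?_
    by_cases hc : v = u + gen n k
    · have hc' : u = v + gen n k := by
        linear_combination -hc - addself (gen n k)
      rw [if_pos hc', if_pos hc, hc, eps_mul, eps_self n hmod, mul_one]
    · have hc' : ¬ u = v + gen n k := fun h => hc (by
        linear_combination -h - addself (gen n k))
      rw [if_neg hc', if_neg hc]
  · -- edges
    rintro u v ⟨hne, hmem⟩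
    obtain ⟨k, hk⟩ : ∃ k, gen n k = u + v := by
      rcases hmem with ⟨i, hi⟩ | hone
      · exact ⟨some i, hi⟩
      · refine ⟨none, ?_⟩
        rw [Set.mem_singleton_iff] at hone
        rw [gen_none, hone, Finset.univ_sum_single (fun _ : Fin n => (1 : ZMod 2))]
        rfl
    have hv : v = u + gen n k := by
      rw [hk]; linear_combination - addself u
    have hval : Msign n u v = eps n k u := by
      unfold Msign
      rw [Finset.sum_eq_single_of_mem k (Finset.mem_univ k)]
      · rw [if_pos hv]
      · intro l _ hlk
        rw [if_neg]
        intro hvl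
        apply hlk
        apply gen_inj n hn
        rw [hk, hvl]
        linear_combination - addself u
    rw [hval]
    exact eps_pm n k u
  · -- non-edges
    intro u v hadj
    unfold Msign
    refine Finset.sum_eq_zero fun k _ => ?_
    rw [if_neg]
    intro hv
    apply hadj
    refine ⟨?_, ?_⟩
    · intro huv
      rw [huv] at hv
      apply gen_ne_zero n hn k
      linear_combination -hv
    · have h2 : u + v = gen n k := by
        rw [hv]; linear_combination addself u
      rw [h2]
      exact gen_mem n k
  · -- orthogonality
    intro u v huv
    have step1 : (∑ w, Msign n u w * Msign n v w)
        = ∑ k : Option (Fin n), ∑ l : Option (Fin n),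
            (if u + gen n k = v + gen n l then eps n k u * eps n l v else 0) := by
      unfold Msign
      rw [Finset.sum_congr rfl fun w _ => by rw [Finset.sum_mul_sum]]
      rw [Finset.sum_comm]
      refine Finset.sum_congr rfl fun k _ => ?_
      rw [Finset.sum_comm]
      refine Finset.sum_congr rfl fun l _ => ?_
      have hterm : ∀ w : Fin n → ZMod 2,
          (if w = u + gen n k then eps n k u else 0) * (if w = v + gen n l then eps n l v else 0)
          = if w = u + gen n k
              then (if u + gen n k = v + gen n l then eps n k u * eps n l v else 0) else 0 := by
        intro w
        by_cases h1 : w = u + gen n k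
        · rw [if_pos h1, if_pos h1]
          by_cases h2 : w = v + gen n l
          · rw [if_pos h2, if_pos (h1.symm.trans h2)]
          · rw [if_neg h2, if_neg (fun hcc => h2 (h1.trans hcc)), mul_zero]
        · rw [if_neg h1, if_neg h1, zero_mul]
      rw [Finset.sum_congr rfl fun w _ => hterm w,
        Finset.sum_ite_eq' Finset.univ (u + gen n k)
          (fun _ => if u + gen n k = v + gen n l then eps n k u * eps n l v else 0),
        if_pos (Finset.mem_univ _)]
    rw [step1]
    have hTT : ∀ k l : Option (Fin n),
        ((if u + gen n k = v + gen n l then eps n k u * eps n l v else 0)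
          + (if u + gen n l = v + gen n k then eps n l u * eps n k v else 0)) = 0 := by
      intro k l
      by_cases hkl : k = l
      · subst hkl
        rw [if_neg (fun h => huv (add_right_cancel h))]
        norm_num
      · by_cases hc : u + gen n k = v + gen n l
        · have hc2 : u + gen n l = v + gen n k := shuffle hc
          rw [if_pos hc, if_pos hc2]
          have hveq : v = u + gen n k + gen n l := by
            linear_combination -hc - addself (gen n l)
          have h1 : eps n l v = eps n l u * eps n l (gen n k) := by
            rw [hveq, eps_mul, eps_mul, eps_self n hmod, mul_one]
          have h2 : eps n k v = eps n k u * eps n k (gen n l) := by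
            rw [hveq, eps_mul, eps_mul, eps_self n hmod, mul_one]
          rw [h1, h2]
          have hanti := eps_anti n hkl
          linear_combination (eps n k u * eps n l u) * hanti
        · rw [if_neg hc, if_neg (fun h => hc (shuffle h)), add_zero]
    have hswap : (∑ k : Option (Fin n), ∑ l : Option (Fin n),
          (if u + gen n k = v + gen n l then eps n k u * eps n l v else 0))
        = ∑ k : Option (Fin n), ∑ l : Option (Fin n),
          (if u + gen n l = v + gen n k then eps n l u * eps n k v else 0) :=
      Finset.sum_comm
    have hzero : (∑ k : Option (Fin n), ∑ l : Option (Fin n),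
        ((if u + gen n k = v + gen n l then eps n k u * eps n l v else 0)
          + (if u + gen n l = v + gen n k then eps n l u * eps n k v else 0))) = 0 :=
      Finset.sum_eq_zero fun k _ => Finset.sum_eq_zero fun l _ => hTT k l
    simp only [Finset.sum_add_distrib] at hzero
    rw [← hswap] at hzero
    linarith [hzero]
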